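/- A finite sequence ⟨g₁,…,g_n⟩ of permutations of ω is called generic if (1) every finite A ⊆ ω is contained in a finite B ⊆ ω with g_i[B] = B for all i, and (2) whenever A is finite with g_i[A] = A for all i, A ⊆ B finite, and h_i ∈ Sym(B) extends g_i↾A for each i, there exists π ∈ Sym(ω) fixing A pointwise such that π g_i π^{-1} extends h_i for all i. Prove: if ⟨g₁,…,g_n⟩ and ⟨h₁,…,h_n⟩ are both generic, then there exists f ∈ Sym(ω) with f g_i f^{-1} = h_i for all 1 ≤ i ≤ n. -/

import Mathlib

/-- A finite tuple `⟨g 0, …, g (n-1)⟩` of permutations of `ω` is *generic* if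
(1) every finite `A ⊆ ω` extends to a finite `B` invariant under all `g i`, and
(2) whenever `A` is finite and invariant under all `g i`, `A ⊆ B` finite, and
`h i ∈ Sym(B)` extends `g i ↾ A` for each `i`, then there is `π ∈ Sym(ω)`
fixing `A` pointwise with `π * g i * π⁻¹` extending `h i` for all `i`. -/
def IsGenericTuple {n : ℕ} (g : Fin n → Equiv.Perm ℕ) : Prop :=
  (∀ A : Finset ℕ, ∃ B : Finset ℕ, A ⊆ B ∧ ∀ i, B.image (g i) = B) ∧
  (∀ A B : Finset ℕ, A ⊆ B → (∀ i, A.image (g i) = A) →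
    ∀ h : Fin n → Equiv.Perm ℕ,
      (∀ i, B.image (h i) = B) → (∀ i, ∀ x ∉ B, h i x = x) →
      (∀ i, ∀ a ∈ A, h i a = g i a) →
      ∃ π : Equiv.Perm ℕ, (∀ a ∈ A, π a = a) ∧
        ∀ i, ∀ b ∈ B, (π * g i * π⁻¹) b = h i b)


/-- image of a finite set under an injective self-map that preserves it equals it. -/
lemma image_eq_of_mapsTo {f : ℕ → ℕ} (hf : Function.Injective f) (S : Finset ℕ)
    (hmaps : ∀ x ∈ S, f x ∈ S) : S.image f = S := by
  apply Finset.eq_of_subset_of_card_le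
  · intro y hy
    obtain ⟨x, hx, rfl⟩ := Finset.mem_image.1 hy
    exact hmaps x hx
  · rw [Finset.card_image_of_injective _ hf]

lemma mem_iff_of_image_eq {f : ℕ → ℕ} (hf : Function.Injective f) {S : Finset ℕ}
    (hS : S.image f = S) : ∀ x, x ∈ S ↔ f x ∈ S := by
  intro x
  constructor
  · intro hx; rw [← hS]; exact Finset.mem_image_of_mem _ hx
  · intro hx
    rw [← hS] at hx
    obtain ⟨a, ha, hax⟩ := Finset.mem_image.1 hx
    rwa [← hf hax]

/-- A partial isomorphism between the tuples `g` and `h`. -/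
structure PIso {n : ℕ} (g h : Fin n → Equiv.Perm ℕ) where
  f : Equiv.Perm ℕ
  A : Finset ℕ
  hgA : ∀ i, A.image (g i) = A
  hhB : ∀ i, (A.image f).image (h i) = A.image f
  hconj : ∀ i, ∀ a ∈ A, f (g i a) = h i (f a)

lemma image_image_inv (f : Equiv.Perm ℕ) (A : Finset ℕ) :
    (A.image f).image ⇑f⁻¹ = A := by
  rw [Finset.image_image]
  ext x
  simp

def PIso.symm {n : ℕ} {g h : Fin n → Equiv.Perm ℕ} (p : PIso g h) : PIso h g where
  f := p.f⁻¹
  A := p.A.image p.f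
  hgA := p.hhB
  hhB := by
    intro i
    rw [image_image_inv]
    exact p.hgA i
  hconj := by
    intro i b hb
    obtain ⟨a, ha, rfl⟩ := Finset.mem_image.1 hb
    rw [← p.hconj i a ha]
    simp

lemma PIso.forth {n : ℕ} {g h : Fin n → Equiv.Perm ℕ} (hg : IsGenericTuple g)
    (hh : IsGenericTuple h) (p : PIso g h) (m : ℕ) :
    ∃ q : PIso g h, p.A ⊆ q.A ∧ m ∈ q.A ∧ ∀ a ∈ p.A, q.f a = p.f a := by
  obtain ⟨A', hA'sub, hA'inv⟩ := hg.1 (insert m p.A)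
  have hpA : p.A ⊆ A' := (Finset.subset_insert m p.A).trans hA'sub
  have hmA : m ∈ A' := hA'sub (Finset.mem_insert_self m p.A)
  have memiff : ∀ i x, x ∈ A' ↔ g i x ∈ A' := fun i =>
    mem_iff_of_image_eq (g i).injective (hA'inv i)
  set C := A'.image p.f with hC
  have hBC : p.A.image p.f ⊆ C := Finset.image_subset_image hpA
  set h' : Fin n → Equiv.Perm ℕ := fun i =>
    p.f * Equiv.Perm.ofSubtype ((g i).subtypePerm (fun x => (memiff i x).symm)) * p.f⁻¹ with hh'
  have key : ∀ i, ∀ a ∈ A', h' i (p.f a) = p.f (g i a) := by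
    intro i a ha
    simp only [hh', Equiv.Perm.mul_apply, Equiv.Perm.inv_def, Equiv.symm_apply_apply]
    rw [Equiv.Perm.ofSubtype_apply_of_mem _ ha]
    rfl
  have key2 : ∀ i, ∀ x ∉ C, h' i x = x := by
    intro i x hx
    have hnx : p.f⁻¹ x ∉ A' := by
      intro hmem
      apply hx
      rw [hC]
      refine Finset.mem_image.2 ⟨p.f⁻¹ x, hmem, ?_⟩
      simp
    simp only [hh', Equiv.Perm.mul_apply]
    rw [Equiv.Perm.ofSubtype_apply_of_not_mem _ hnx]
    simp
  have key3 : ∀ i, C.image (h' i) = C := by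
    intro i
    apply image_eq_of_mapsTo (h' i).injective
    intro x hx
    obtain ⟨a, ha, rfl⟩ := Finset.mem_image.1 hx
    rw [key i a ha]
    refine Finset.mem_image.2 ⟨g i a, ?_, rfl⟩
    exact (memiff i a).1 ha
  have key4 : ∀ i, ∀ b ∈ p.A.image p.f, h' i b = h i b := by
    intro i b hb
    obtain ⟨a, ha, rfl⟩ := Finset.mem_image.1 hb
    rw [key i a (hpA ha), p.hconj i a ha]
  obtain ⟨π, hπfix, hπconj⟩ := hh.2 (p.A.image p.f) C hBC p.hhB h' key3 key2 key4
  have hπinvfix : ∀ b ∈ p.A.image p.f, π⁻¹ b = b := by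
    intro b hb
    conv_lhs => rw [← hπfix b hb]
    simp
  have hrel : ∀ i, ∀ c ∈ C, h i (π⁻¹ c) = π⁻¹ (h' i c) := by
    intro i c hc
    have := hπconj i c hc
    simp only [Equiv.Perm.mul_apply] at this
    rw [← this]
    simp
  refine ⟨⟨π⁻¹ * p.f, A', hA'inv, ?_, ?_⟩, hpA, hmA, ?_⟩
  · intro i
    apply image_eq_of_mapsTo (h i).injective
    intro x hx
    obtain ⟨a, ha, rfl⟩ := Finset.mem_image.1 hx
    have hfaC : p.f a ∈ C := Finset.mem_image_of_mem _ ha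
    have : h i ((π⁻¹ * p.f) a) = (π⁻¹ * p.f) (g i a) := by
      simp only [Equiv.Perm.mul_apply]
      rw [hrel i _ hfaC, key i a ha]
    rw [this]
    exact Finset.mem_image_of_mem _ ((memiff i a).1 ha)
  · intro i a ha
    simp only [Equiv.Perm.mul_apply]
    rw [← key i a ha, hrel i _ (Finset.mem_image_of_mem _ ha)]
  · intro a ha
    simp only [Equiv.Perm.mul_apply]
    exact hπinvfix _ (Finset.mem_image_of_mem _ ha)

lemma PIso.step {n : ℕ} {g h : Fin n → Equiv.Perm ℕ} (hg : IsGenericTuple g)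
    (hh : IsGenericTuple h) (p : PIso g h) (m : ℕ) :
    ∃ q : PIso g h, p.A ⊆ q.A ∧ m ∈ q.A ∧ m ∈ q.A.image q.f ∧
      ∀ a ∈ p.A, q.f a = p.f a := by
  obtain ⟨q1, h1sub, h1m, h1f⟩ := PIso.forth hg hh p m
  obtain ⟨r, h2sub, h2m, h2f⟩ := PIso.forth hh hg q1.symm m
  have hsymmA : q1.symm.A = q1.A.image q1.f := rfl
  have hkey : ∀ a ∈ q1.A, r.f (q1.f a) = a := by
    intro a ha
    have hmem : q1.f a ∈ q1.A.image q1.f := Finset.mem_image_of_mem _ ha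
    rw [h2f _ hmem]
    simp [PIso.symm]
  have hmemA : ∀ a ∈ q1.A, a ∈ r.symm.A := by
    intro a ha
    exact Finset.mem_image.2 ⟨q1.f a, h2sub (Finset.mem_image_of_mem _ ha), hkey a ha⟩
  have hinv : ∀ a ∈ q1.A, r.symm.f a = q1.f a := by
    intro a ha
    show r.f⁻¹ a = q1.f a
    rw [Equiv.Perm.inv_eq_iff_eq]
    exact (hkey a ha).symm
  refine ⟨r.symm, fun a ha => hmemA a (h1sub ha), hmemA m h1m, ?_, ?_⟩
  · show m ∈ r.symm.A.image r.symm.f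
    have : r.symm.A.image r.symm.f = r.A := image_image_inv r.f r.A
    rw [this]
    exact h2m
  · intro a ha
    rw [hinv a (h1sub ha), h1f a ha]

def PIso.base {n : ℕ} (g h : Fin n → Equiv.Perm ℕ) : PIso g h where
  f := 1
  A := ∅
  hgA := by simp
  hhB := by simp
  hconj := by simp

noncomputable def chain {n : ℕ} {g h : Fin n → Equiv.Perm ℕ} (hg : IsGenericTuple g)
    (hh : IsGenericTuple h) : ℕ → PIso g h
  | 0 => PIso.base g h
  | (k+1) => Classical.choose (PIso.step hg hh (chain hg hh k) k)

lemma chain_spec {n : ℕ} {g h : Fin n → Equiv.Perm ℕ} (hg : IsGenericTuple g)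
    (hh : IsGenericTuple h) (k : ℕ) :
    (chain hg hh k).A ⊆ (chain hg hh (k+1)).A ∧ k ∈ (chain hg hh (k+1)).A ∧
      k ∈ (chain hg hh (k+1)).A.image (chain hg hh (k+1)).f ∧
      ∀ a ∈ (chain hg hh k).A, (chain hg hh (k+1)).f a = (chain hg hh k).f a :=
  Classical.choose_spec (PIso.step hg hh (chain hg hh k) k)

lemma chain_mono {n : ℕ} {g h : Fin n → Equiv.Perm ℕ} (hg : IsGenericTuple g)
    (hh : IsGenericTuple h) {k l : ℕ} (hkl : k ≤ l) :
    (chain hg hh k).A ⊆ (chain hg hh l).A ∧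
      ∀ a ∈ (chain hg hh k).A, (chain hg hh l).f a = (chain hg hh k).f a := by
  induction l, hkl using Nat.le_induction with
  | base => exact ⟨subset_rfl, fun a _ => rfl⟩
  | succ l hkl ih =>
    obtain ⟨hsub, _, _, hf⟩ := chain_spec hg hh l
    exact ⟨ih.1.trans hsub, fun a ha => by
      rw [hf a (ih.1 ha), ih.2 a ha]⟩

/-- Claim 2.8: any two generic `n`-tuples of permutations of `ω` are
simultaneously conjugate. -/
theorem stmt_7 {n : ℕ} (g h : Fin n → Equiv.Perm ℕ)
    (hg : IsGenericTuple g) (hh : IsGenericTuple h) :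
    ∃ f : Equiv.Perm ℕ, ∀ i, f * g i * f⁻¹ = h i := by
  set P := chain hg hh with hP
  set F : ℕ → ℕ := fun x => (P (x+1)).f x with hF
  have hmemself : ∀ x, x ∈ (P (x+1)).A := fun x => (chain_spec hg hh x).2.1
  have hagree : ∀ k x, x ∈ (P k).A → (P k).f x = F x := by
    intro k x hx
    have h1 := chain_mono hg hh (le_max_left k (x+1))
    have h2 := chain_mono hg hh (le_max_right k (x+1))
    rw [hF]
    simp only
    rw [← h1.2 x hx, h2.2 x (hmemself x)]
  have hagree' : ∀ k x, x ∈ (P k).A → ∀ l, k ≤ l → (P l).f x = F x := by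
    intro k x hx l hkl
    exact hagree l x ((chain_mono hg hh hkl).1 hx)
  have hinj : Function.Injective F := by
    intro x y hxy
    have hx := hmemself x
    have hy := hmemself y
    set N := max (x+1) (y+1) with hN
    have hx' : x ∈ (P N).A := (chain_mono hg hh (le_max_left _ _)).1 hx
    have hy' : y ∈ (P N).A := (chain_mono hg hh (le_max_right _ _)).1 hy
    rw [← hagree N x hx', ← hagree N y hy'] at hxy
    exact (P N).f.injective hxy
  have hsurj : Function.Surjective F := by
    intro y
    obtain ⟨a, ha, hay⟩ := Finset.mem_image.1 (chain_spec hg hh y).2.2.1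
    exact ⟨a, by rw [← hagree (y+1) a ha, hay]⟩
  have hconjF : ∀ i x, F (g i x) = h i (F x) := by
    intro i x
    set N := max (x+1) ((g i x)+1) with hN
    have hx : x ∈ (P N).A := (chain_mono hg hh (le_max_left _ _)).1 (hmemself x)
    have hgx : g i x ∈ (P N).A := by
      rw [← (P N).hgA i]
      exact Finset.mem_image_of_mem _ hx
    rw [← hagree N _ hgx, ← hagree N x hx]
    exact (P N).hconj i x hx
  set f : Equiv.Perm ℕ := Equiv.ofBijective F ⟨hinj, hsurj⟩ with hf
  have hfapp : ∀ x, f x = F x := fun x => rfl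
  refine ⟨f, fun i => ?_⟩
  ext x
  simp only [Equiv.Perm.mul_apply]
  have : f⁻¹ = f.symm := rfl
  rw [this, hfapp, hconjF i (f.symm x)]
  congr 1
  rw [← hfapp, Equiv.apply_symm_apply]
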